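/- Let X be a simplicial complex, Γ a finite collection of subcomplexes of X, F a field, and k an integer with -1 ≤ k ≤ |Γ| - 2. Suppose that for every subcollection Γ' ⊆ Γ: (1h) H̃_{k-|Γ'|}(⋂Γ', F) = 0 whenever 1 ≤ |Γ'| ≤ k+1, and (2h) H̃_{|Γ'|-2}(⋃Γ', F) = 0 whenever k+2 ≤ |Γ'| ≤ |Γ|. Then ⋂Γ ≠ ∅. -/

import Mathlib

open Finset

/-- The faces of an abstract simplicial complex: a set of nonempty finite sets of
vertices, closed under taking nonempty subsets. -/
def IsComplex {V : Type*} (S : Set (Finset V)) : Prop :=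
  (∀ s ∈ S, s.Nonempty) ∧ ∀ s ∈ S, ∀ t ⊆ s, t.Nonempty → t ∈ S

/-- The nerve of a collection `Γ` of (sub)complexes, as a set of finsets of the index
type: the simplices are the nonempty subcollections with a common face. -/
def nerveC {ι V : Type*} (Γ : ι → Set (Finset V)) : Set (Finset ι) :=
  {σ | σ.Nonempty ∧ (⋂ i ∈ (σ : Finset ι), Γ i).Nonempty}

/-- Simplicial `n`-chains (dimension `n`, i.e. on vertex sets of cardinality `n+1`)
on the vertex type `V`, with coefficients in `A`. -/
abbrev Chains (A V : Type*) [AddCommGroup A] [LinearOrder V] (n : ℕ) : Type _ :=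
  {s : Finset V // s.card = n + 1} →₀ A

variable (R : Type*) [CommRing R] (A : Type*) [AddCommGroup A] [Module R A]
variable (V : Type*) [LinearOrder V]

/-- The simplicial boundary map, with the usual alternating signs determined by the
linear order on the vertices. -/
noncomputable def bdry (n : ℕ) : Chains A V (n + 1) →ₗ[R] Chains A V n :=
  Finsupp.lsum R fun s =>
    ∑ v ∈ (s : Finset V).attach,
      ((-1 : ℤ) ^ (((s : Finset V).filter (fun w => w < v.1)).card)) •
        (Finsupp.lsingle (R := R) ⟨(s : Finset V).erase v.1, by
          rw [Finset.card_erase_of_mem v.2, s.2]; rfl⟩)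

/-- The augmentation map on `0`-chains. -/
noncomputable def aug : Chains A V 0 →ₗ[R] A :=
  Finsupp.lsum R fun _ => LinearMap.id

/-- Reduced cycles: kernel of the boundary map, resp. of the augmentation in degree 0. -/
noncomputable def cycles : (n : ℕ) → Submodule R (Chains A V n)
  | 0 => LinearMap.ker (aug R A V)
  | (n + 1) => LinearMap.ker (bdry R A V n)

/-- Chains supported on the simplices belonging to `S`. -/
def chainsIn (S : Set (Finset V)) (n : ℕ) : Submodule R (Chains A V n) :=
  Finsupp.supported A R {s : {s : Finset V // s.card = n + 1} | ↑s ∈ S}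

/-- Reduced cycles of the complex `S`. -/
noncomputable def cyclesIn (S : Set (Finset V)) (n : ℕ) : Submodule R (Chains A V n) :=
  cycles R A V n ⊓ chainsIn R A V S n

/-- Boundaries of chains of the complex `S`. -/
noncomputable def boundariesIn (S : Set (Finset V)) (n : ℕ) : Submodule R (Chains A V n) :=
  Submodule.map (bdry R A V n) (chainsIn R A V S (n + 1))

/-- Reduced simplicial homology of the complex `S` in degree `n ≥ 0`,
with coefficients in the `R`-module `A`. -/
noncomputable abbrev redH (S : Set (Finset V)) (n : ℕ) : Type _ :=
  (cyclesIn R A V S n) ⧸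
    (Submodule.comap (cyclesIn R A V S n).subtype (boundariesIn R A V S n))

/-- Vanishing of the reduced homology of `S` in degree `n : ℤ`, with the convention
that `H̃₋₁(S) = 0` iff `S` is nonempty (and trivial vanishing below degree `-1`). -/
def RedHVanish (S : Set (Finset V)) (n : ℤ) : Prop :=
  if n < -1 then True
  else if n = -1 then S.Nonempty
  else Subsingleton (redH R A V S n.toNat)

open scoped Classical in
/-- The dimension (rank) of the reduced homology of `S` in degree `n : ℤ`; in degree `-1`
it is `0` iff `S` is nonempty, in accordance with the convention. -/
noncomputable def redHRank (S : Set (Finset V)) (n : ℤ) : Cardinal :=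
  if n < -1 then 0
  else if n = -1 then (if S.Nonempty then (0 : Cardinal) else 1)
  else Module.rank R (redH R A V S n.toNat)


section HellyAux

variable {V} {F : Type*} [Field F]

open Finsupp in
theorem aug_single {s : {s : Finset V // s.card = 0 + 1}} {a : F} :
    aug F F V (Finsupp.single s a) = a := by
  classical
  unfold aug
  rw [Finsupp.lsum_apply, Finsupp.sum_single_index] <;> rfl

variable {ι : Type*}

/-- incidence sign -/
def esgn [LinearOrder ι] (F : Type*) [Field F] (σ : Finset ι) (i : ι) : F :=
  (-1 : F) ^ (σ.filter (· < i)).card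

theorem esgn_mul_self [LinearOrder ι] (σ : Finset ι) (i : ι) :
    esgn F σ i * esgn F σ i = 1 := by
  unfold esgn
  rw [← pow_add, ← two_mul, pow_mul, neg_one_sq, one_pow]

theorem esgn_ne_zero [LinearOrder ι] (σ : Finset ι) (i : ι) : esgn F σ i ≠ 0 :=
  pow_ne_zero _ (neg_ne_zero.mpr one_ne_zero)

theorem card_filter_insert [LinearOrder ι] [DecidableEq ι] {σ : Finset ι} {i : ι} (hi : i ∉ σ) (j : ι) :
    ((insert i σ).filter (· < j)).card
      = (σ.filter (· < j)).card + if i < j then 1 else 0 := by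
  rw [Finset.filter_insert]
  split
  · rw [Finset.card_insert_of_notMem (fun h => hi (Finset.mem_of_mem_filter _ h))]
  · rfl

theorem esgn_antisym [LinearOrder ι] [DecidableEq ι] {σ : Finset ι} {i j : ι}
    (hi : i ∉ σ) (hj : j ∉ σ) (hij : i ≠ j) :
    esgn F σ i * esgn F (insert i σ) j = -(esgn F σ j * esgn F (insert j σ) i) := by
  unfold esgn
  rw [← pow_add, ← pow_add, card_filter_insert hi j, card_filter_insert hj i]
  rcases hij.lt_or_gt with h | h
  · rw [if_pos h, if_neg (asymm h)]
    rw [add_zero, ← add_assoc, add_comm ((σ.filter (· < i)).card), pow_succ]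
    ring
  · rw [if_neg (asymm h), if_pos h]
    rw [add_zero, ← add_assoc, add_comm ((σ.filter (· < j)).card), pow_succ]
    ring

end HellyAux
section HellyAux2
variable {F : Type*} [Field F] {ι : Type*} {M : Type*} [AddCommGroup M]

/-- pairwise antisymmetric double sums vanish -/
theorem sum_pair_antisym [DecidableEq ι] (s : Finset ι) (h : ι → ι → M)
    (hh : ∀ i ∈ s, ∀ j ∈ s, i ≠ j → h i j + h j i = 0) :
    ∑ i ∈ s, ∑ j ∈ s.erase i, h i j = 0 := by
  classical
  rw [Finset.sum_sigma']
  refine Finset.sum_involution (fun p hp => ⟨p.2, p.1⟩) ?_ ?_ ?_ ?_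
  · rintro ⟨i, j⟩ hp
    simp only [Finset.mem_sigma, Finset.mem_erase] at hp
    exact hh i hp.1 j hp.2.2 (fun e => hp.2.1 e.symm)
  · rintro ⟨i, j⟩ hp _
    simp only [Finset.mem_sigma, Finset.mem_erase] at hp
    intro e
    exact hp.2.1 (congrArg Sigma.fst e)
  · rintro ⟨i, j⟩ hp
    simp only [Finset.mem_sigma, Finset.mem_erase] at hp ⊢
    exact ⟨hp.2.2, fun e => hp.2.1 e.symm, hp.1⟩
  · rintro ⟨i, j⟩ hp
    rfl

end HellyAux2
section HellyAux3
variable {V} {F : Type*} [Field F]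

/-- single chain on a finset, 0 if wrong cardinality -/
noncomputable def esingle (m : ℕ) (t : Finset V) (a : F) : Chains F V m :=
  if h : t.card = m + 1 then Finsupp.single ⟨t, h⟩ a else 0

theorem esingle_of_card {m : ℕ} {t : Finset V} (h : t.card = m + 1) (a : F) :
    esingle m t a = Finsupp.single ⟨t, h⟩ a := by
  unfold esingle; rw [dif_pos h]

theorem bdry_single {d : ℕ} (s : {t : Finset V // t.card = d + 1 + 1}) (a : F) :
    bdry F F V d (Finsupp.single s a) =
      ∑ v ∈ (↑s : Finset V), esgn F ((↑s : Finset V).erase v) v • esingle d ((↑s : Finset V).erase v) a := by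
  classical
  unfold bdry
  rw [Finsupp.lsum_apply, Finsupp.sum_single_index]
  swap
  · rw [LinearMap.map_zero]
  rw [LinearMap.sum_apply, ← Finset.sum_attach (↑s : Finset V)
    (fun v => esgn F ((↑s : Finset V).erase v) v • esingle d ((↑s : Finset V).erase v) a)]
  refine Finset.sum_congr rfl ?_
  intro v _
  rw [LinearMap.smul_apply, Finsupp.lsingle_apply]
  rw [esingle_of_card (by rw [Finset.card_erase_of_mem v.2, s.2]; rfl)]
  have hf : Finset.filter (· < (v : V)) ((↑s : Finset V).erase ↑v)
      = Finset.filter (fun w => w < ↑v) (↑s : Finset V) := by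
    ext x
    simp only [Finset.mem_filter, Finset.mem_erase]
    exact ⟨fun h => ⟨h.1.2, h.2⟩, fun h => ⟨⟨ne_of_lt h.2, h.1⟩, h.2⟩⟩
  unfold esgn
  rw [hf, ← Int.cast_smul_eq_zsmul F]
  norm_num


theorem bdry_esingle {d : ℕ} (t : Finset V) (a : F) :
    bdry F F V d (esingle (d+1) t a) =
      ∑ v ∈ t, esgn F (t.erase v) v • esingle d (t.erase v) a := by
  classical
  unfold esingle
  split
  · rw [bdry_single]
    refine Finset.sum_congr rfl fun v hv => ?_
    unfold esingle
    rfl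
  · rw [LinearMap.map_zero]
    rename_i h
    symm
    refine Finset.sum_eq_zero fun v hv => ?_
    rw [dif_neg, smul_zero]
    intro hc
    exact h (by rw [← Finset.card_erase_add_one hv, hc])

theorem bdry_bdry {d : ℕ} (x : Chains F V (d + 1 + 1)) :
    bdry F F V d (bdry F F V (d+1) x) = 0 := by
  classical
  induction x using Finsupp.induction_linear with
  | zero => simp
  | add f g hf hg => rw [map_add, map_add, hf, hg, add_zero]
  | single s a =>
    rw [bdry_single, map_sum]
    have : ∀ v ∈ (↑s : Finset V),
        bdry F F V d (esgn F ((↑s:Finset V).erase v) v • esingle (d+1) ((↑s:Finset V).erase v) a)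
        = ∑ w ∈ (↑s:Finset V).erase v, (esgn F ((↑s:Finset V).erase v) v *
            esgn F (((↑s:Finset V).erase v).erase w) w) • esingle d (((↑s:Finset V).erase v).erase w) a := by
      intro v hv
      rw [map_smul, bdry_esingle, Finset.smul_sum]
      refine Finset.sum_congr rfl fun w hw => ?_
      rw [smul_smul]
    rw [Finset.sum_congr rfl this]
    refine sum_pair_antisym (↑s : Finset V) _ ?_
    intro v hv w hw hvw
    have hwv : w ∈ (↑s:Finset V).erase v := Finset.mem_erase.2 ⟨fun e => hvw e.symm, hw⟩
    have hvw' : v ∈ (↑s:Finset V).erase w := Finset.mem_erase.2 ⟨hvw, hv⟩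
    set σ : Finset V := ((↑s:Finset V).erase v).erase w with hσ
    have hcomm : ((↑s:Finset V).erase w).erase v = σ := by rw [hσ, Finset.erase_right_comm]
    have hvnσ : v ∉ σ := fun h => (Finset.mem_erase.1 (Finset.mem_of_mem_erase h)).1 rfl
    have hwnσ : w ∉ σ := fun h => (Finset.mem_erase.1 h).1 rfl
    have h1 : (↑s:Finset V).erase v = insert w σ := by
      rw [hσ, Finset.insert_erase hwv]
    have h2 : (↑s:Finset V).erase w = insert v σ := by
      rw [← hcomm, Finset.insert_erase hvw']
    rw [hcomm, h1, h2, ← add_smul]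
    rw [mul_comm (esgn F (insert w σ) v), mul_comm (esgn F (insert v σ) w)]
    rw [esgn_antisym hwnσ hvnσ (fun e => hvw e.symm)]
    rw [neg_add_cancel, zero_smul]

theorem aug_bdry {x : Chains F V (0 + 1)} : aug F F V (bdry F F V 0 x) = 0 := by
  classical
  induction x using Finsupp.induction_linear with
  | zero => simp
  | add f g hf hg => rw [map_add, map_add, hf, hg, add_zero]
  | single s a =>
    rw [bdry_single, map_sum]
    obtain ⟨x, y, hxy, hs⟩ := Finset.card_eq_two.1 s.2
    have hsx : (↑s : Finset V) = {x, y} := hs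
    rw [hsx]
    rw [Finset.sum_pair hxy]
    have e1 : ({x, y} : Finset V).erase x = {y} := by
      rw [Finset.erase_insert (by simp [hxy])]
    have e2 : ({x, y} : Finset V).erase y = {x} := by
      rw [Finset.pair_comm, Finset.erase_insert (by simp [Ne.symm hxy])]
    rw [e1, e2, map_smul, map_smul,
        esingle_of_card (t := ({y} : Finset V)) (by simp),
        esingle_of_card (t := ({x} : Finset V)) (by simp),
        aug_single, aug_single]
    unfold esgn
    rcases hxy.lt_or_gt with h | h
    · rw [Finset.filter_singleton, if_neg (not_lt.2 h.le), Finset.filter_singleton, if_pos h]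
      simp
    · rw [Finset.filter_singleton, if_pos h, Finset.filter_singleton, if_neg (not_lt.2 h.le)]
      simp

end HellyAux3
section HellyAux4
variable {V} {F : Type*} [Field F]

theorem mem_chainsIn {S : Set (Finset V)} {d : ℕ} {x : Chains F V d} :
    x ∈ chainsIn F F V S d ↔ ∀ f ∈ x.support, (↑f : Finset V) ∈ S := by
  rw [chainsIn, Finsupp.mem_supported]
  constructor
  · intro h f hf; exact h hf
  · intro h f hf; exact h f hf

theorem chainsIn_mono {S T : Set (Finset V)} (h : S ⊆ T) {d : ℕ} :
    chainsIn F F V S d ≤ chainsIn F F V T d :=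
  Finsupp.supported_mono (fun f hf => h hf)

theorem chainsIn_empty {d : ℕ} {x : Chains F V d} (h : x ∈ chainsIn F F V (∅ : Set (Finset V)) d) :
    x = 0 := by
  rw [mem_chainsIn] at h
  ext f
  by_contra hne
  exact h f (Finsupp.mem_support_iff.2 fun e => hne (by rw [e]; rfl)) 

theorem esingle_mem_chainsIn {S : Set (Finset V)} {d : ℕ} {t : Finset V} (h : t ∈ S) (a : F) :
    esingle d t a ∈ chainsIn F F V S d := by
  unfold esingle
  split
  · rw [mem_chainsIn]
    intro f hf
    have := Finsupp.support_single_subset hf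
    rw [Finset.mem_singleton] at this
    rw [this]
    exact h
  · exact Submodule.zero_mem _

theorem mem_chainsIn_inter {S T : Set (Finset V)} {d : ℕ} {x : Chains F V d} :
    x ∈ chainsIn F F V (S ∩ T) d ↔ x ∈ chainsIn F F V S d ∧ x ∈ chainsIn F F V T d := by
  simp only [mem_chainsIn, Set.mem_inter_iff]
  exact ⟨fun h => ⟨fun f hf => (h f hf).1, fun f hf => (h f hf).2⟩,
    fun h f hf => ⟨h.1 f hf, h.2 f hf⟩⟩

theorem bdry_mem_chainsIn {S : Set (Finset V)} (hS : IsComplex S) {d : ℕ}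
    {x : Chains F V (d+1)} (hx : x ∈ chainsIn F F V S (d+1)) :
    bdry F F V d x ∈ chainsIn F F V S d := by
  classical
  induction x using Finsupp.induction with
  | zero => rw [map_zero]; exact Submodule.zero_mem _
  | single_add s b f hs hb ih =>
    rw [mem_chainsIn] at hx
    have hfS : f ∈ chainsIn F F V S (d+1) := by
      rw [mem_chainsIn]
      intro g hg
      refine hx g ?_
      rw [Finsupp.support_add_eq ?_]
      · exact Finset.mem_union_right _ hg
      · rw [Finsupp.support_single_ne_zero _ hb]
        simp [Finset.disjoint_singleton_left, hs]
    have hsS : (↑s : Finset V) ∈ S := by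
      refine hx s ?_
      rw [Finsupp.support_add_eq ?_, Finsupp.support_single_ne_zero _ hb]
      · exact Finset.mem_union_left _ (Finset.mem_singleton_self s)
      · rw [Finsupp.support_single_ne_zero _ hb]
        simp [Finset.disjoint_singleton_left, hs]
    rw [map_add]
    refine Submodule.add_mem _ ?_ (ih hfS)
    rw [bdry_single]
    refine Submodule.sum_mem _ fun v hv => Submodule.smul_mem _ _ ?_
    refine esingle_mem_chainsIn ?_ _
    refine hS.2 _ hsS _ (Finset.erase_subset _ _) ?_
    rw [← Finset.card_pos, Finset.card_erase_of_mem hv, s.2]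
    omega

theorem vertex_mem {S : Set (Finset V)} (hS : IsComplex S) (hne : S.Nonempty) :
    ∃ v : V, ({v} : Finset V) ∈ S := by
  obtain ⟨f, hf⟩ := hne
  have hfne : f.Nonempty := hS.1 f hf
  exact ⟨f.min' hfne, hS.2 f hf _ (Finset.singleton_subset_iff.2 (f.min'_mem hfne)) (Finset.singleton_nonempty _)⟩

theorem aug_esingle_vertex (v : V) (a : F) : aug F F V (esingle 0 ({v} : Finset V) a) = a := by
  rw [esingle_of_card (by simp), aug_single]

theorem chainsIn_union_split {S T : Set (Finset V)} {d : ℕ} {x : Chains F V d}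
    (hx : x ∈ chainsIn F F V (S ∪ T) d) :
    ∃ y z, y ∈ chainsIn F F V S d ∧ z ∈ chainsIn F F V T d ∧ x = y + z := by
  classical
  refine ⟨x.filter (fun f => (↑f : Finset V) ∈ S), x.filter (fun f => ¬ (↑f : Finset V) ∈ S),
    ?_, ?_, ?_⟩
  · rw [mem_chainsIn]
    intro f hf
    rw [Finsupp.support_filter, Finset.mem_filter] at hf
    exact hf.2
  · rw [mem_chainsIn]
    intro f hf
    rw [Finsupp.support_filter, Finset.mem_filter] at hf
    rcases (mem_chainsIn.1 hx) f hf.1 with h | h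
    · exact absurd h hf.2
    · exact h
  · rw [Finsupp.filter_pos_add_filter_neg]

theorem chainsIn_biUnion_split {ι : Type*} [DecidableEq ι] {S : ι → Set (Finset V)} {d : ℕ}
    (t : Finset ι) :
    ∀ x : Chains F V d, x ∈ chainsIn F F V (⋃ i ∈ (t : Finset ι), S i) d →
    ∃ y : ι → Chains F V d, (∀ i, y i ∈ chainsIn F F V (S i) d) ∧ x = ∑ i ∈ t, y i := by
  classical
  induction t using Finset.induction with
  | empty =>
    intro x hx
    refine ⟨fun _ => 0, fun i => Submodule.zero_mem _, ?_⟩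
    rw [Finset.sum_empty]
    simpa using chainsIn_empty (by simpa using hx)
  | @insert a t ha ih =>
    intro x hx
    rw [show (⋃ i ∈ (insert a t : Finset ι), S i) = S a ∪ ⋃ i ∈ (t : Finset ι), S i by
      simp [Set.biUnion_insert]] at hx
    obtain ⟨y, z, hy, hz, rfl⟩ := chainsIn_union_split hx
    obtain ⟨w, hw, rfl⟩ := ih z hz
    refine ⟨Function.update w a y, fun i => ?_, ?_⟩
    · by_cases h : i = a
      · subst h
        simp only [Function.update_self]
        exact hy
      · simp only [Function.update_of_ne h]
        exact hw i
    · rw [Finset.sum_insert ha]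
      have h1 : Function.update w a y a = y := Function.update_self a _ w
      have h2 : ∀ i ∈ t, Function.update w a y i = w i := by
        intro i hi
        refine Function.update_of_ne (fun e => ha ?_) _ w
        rw [← e]; exact hi
      rw [h1, Finset.sum_congr rfl h2]

end HellyAux4
section HellyAux5
variable {V} {F : Type*} [Field F]

theorem isComplex_inter {S T : Set (Finset V)} (hS : IsComplex S) (hT : IsComplex T) :
    IsComplex (S ∩ T) :=
  ⟨fun s hs => hS.1 s hs.1,
   fun s hs t ht htne => ⟨hS.2 s hs.1 t ht htne, hT.2 s hs.2 t ht htne⟩⟩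

theorem isComplex_biUnion {ι : Type*} {S : ι → Set (Finset V)} {σ : Finset ι}
    (h : ∀ i ∈ σ, IsComplex (S i)) : IsComplex (⋃ i ∈ (σ : Finset ι), S i) := by
  constructor
  · intro s hs
    simp only [Set.mem_iUnion] at hs
    obtain ⟨i, hi, hsi⟩ := hs
    exact (h i hi).1 s hsi
  · intro s hs t ht htne
    simp only [Set.mem_iUnion] at hs ⊢
    obtain ⟨i, hi, hsi⟩ := hs
    exact ⟨i, hi, (h i hi).2 s hsi t ht htne⟩

theorem isComplex_biInter {ι : Type*} {S : ι → Set (Finset V)} {σ : Finset ι}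
    (hne : σ.Nonempty) (h : ∀ i ∈ σ, IsComplex (S i)) :
    IsComplex (⋂ i ∈ (σ : Finset ι), S i) := by
  constructor
  · intro s hs
    simp only [Set.mem_iInter] at hs
    obtain ⟨i, hi⟩ := hne
    exact (h i hi).1 s (hs i hi)
  · intro s hs t ht htne
    simp only [Set.mem_iInter] at hs ⊢
    intro i hi
    exact (h i hi).2 s (hs i hi) t ht htne

theorem mem_cyclesIn_zero {S : Set (Finset V)} {x : Chains F V 0} :
    x ∈ cyclesIn F F V S 0 ↔ aug F F V x = 0 ∧ x ∈ chainsIn F F V S 0 := by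
  rw [cyclesIn, Submodule.mem_inf]
  constructor
  · exact fun h => ⟨h.1, h.2⟩
  · exact fun h => ⟨h.1, h.2⟩

theorem mem_cyclesIn_succ {S : Set (Finset V)} {d : ℕ} {x : Chains F V (d+1)} :
    x ∈ cyclesIn F F V S (d+1) ↔ bdry F F V d x = 0 ∧ x ∈ chainsIn F F V S (d+1) := by
  rw [cyclesIn, Submodule.mem_inf]
  constructor
  · exact fun h => ⟨h.1, h.2⟩
  · exact fun h => ⟨h.1, h.2⟩

/-- homology-vanishing as a solvability statement -/
def VanN (F : Type*) [Field F] {V : Type*} [LinearOrder V] (S : Set (Finset V)) (d : ℕ) : Prop :=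
  ∀ z ∈ cyclesIn F F V S d, ∃ w ∈ chainsIn F F V S (d+1), bdry F F V d w = z

theorem redHVanish_toVan {S : Set (Finset V)} {d : ℕ}
    (h : RedHVanish F F V S ((d : ℤ))) : VanN F S d := by
  unfold RedHVanish at h
  rw [if_neg (by omega), if_neg (by omega)] at h
  have hd : ((d : ℤ)).toNat = d := Int.toNat_natCast d
  rw [hd] at h
  intro z hz
  have : Submodule.Quotient.mk (⟨z, hz⟩ : cyclesIn F F V S d)
      = Submodule.Quotient.mk (0 : cyclesIn F F V S d) := h.elim _ _
  rw [Submodule.Quotient.eq] at this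
  rw [sub_zero] at this
  have hz' : z ∈ boundariesIn F F V S d := this
  rw [boundariesIn, Submodule.mem_map] at hz'
  obtain ⟨w, hw, hwe⟩ := hz'
  exact ⟨w, hw, hwe⟩

theorem redHVanish_toNonempty {S : Set (Finset V)}
    (h : RedHVanish F F V S (-1)) : S.Nonempty := by
  unfold RedHVanish at h
  rw [if_neg (by omega), if_pos rfl] at h
  exact h

theorem MV1_succ {A B : Set (Finset V)} (hA : IsComplex A) (hB : IsComplex B) {e : ℕ}
    (vA : VanN F A (e+1)) (vB : VanN F B (e+1)) (vI : VanN F (A ∩ B) e) :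
    VanN F (A ∪ B) (e+1) := by
  intro z hz
  rw [mem_cyclesIn_succ] at hz
  obtain ⟨hzc, hzm⟩ := hz
  obtain ⟨a, b, ha, hb, rfl⟩ := chainsIn_union_split hzm
  have hbb : bdry F F V e a = - bdry F F V e b := by
    have h0 : bdry F F V e a + bdry F F V e b = 0 := by rw [← map_add]; exact hzc
    exact eq_neg_of_add_eq_zero_left h0
  have hbm : bdry F F V e a ∈ chainsIn F F V (A ∩ B) e := by
    rw [mem_chainsIn_inter]
    refine ⟨bdry_mem_chainsIn hA ha, ?_⟩
    rw [hbb]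
    exact Submodule.neg_mem _ (bdry_mem_chainsIn hB hb)
  have hcyc : bdry F F V e a ∈ cyclesIn F F V (A ∩ B) e := by
    cases e with
    | zero => exact mem_cyclesIn_zero.2 ⟨aug_bdry, hbm⟩
    | succ e' => exact mem_cyclesIn_succ.2 ⟨bdry_bdry a, hbm⟩
  obtain ⟨x, hx, hxe⟩ := vI _ hcyc
  have hax : a - x ∈ cyclesIn F F V A (e+1) := by
    refine mem_cyclesIn_succ.2 ⟨by rw [map_sub, hxe, sub_self], ?_⟩
    exact Submodule.sub_mem _ ha (chainsIn_mono Set.inter_subset_left hx)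
  obtain ⟨u, hu, hue⟩ := vA _ hax
  have hbx : b + x ∈ cyclesIn F F V B (e+1) := by
    refine mem_cyclesIn_succ.2 ⟨?_, ?_⟩
    · rw [map_add, hxe, hbb]
      abel
    · exact Submodule.add_mem _ hb (chainsIn_mono Set.inter_subset_right hx)
  obtain ⟨v, hv, hve⟩ := vB _ hbx
  refine ⟨u + v, Submodule.add_mem _ (chainsIn_mono Set.subset_union_left hu)
    (chainsIn_mono Set.subset_union_right hv), ?_⟩
  rw [map_add, hue, hve]
  abel

theorem MV1_zero {A B : Set (Finset V)} (hA : IsComplex A) (hB : IsComplex B)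
    (vA : VanN F A 0) (vB : VanN F B 0) (hne : (A ∩ B).Nonempty) :
    VanN F (A ∪ B) 0 := by
  intro z hz
  rw [mem_cyclesIn_zero] at hz
  obtain ⟨hzc, hzm⟩ := hz
  obtain ⟨a, b, ha, hb, rfl⟩ := chainsIn_union_split hzm
  obtain ⟨p, hp⟩ := vertex_mem (isComplex_inter hA hB) hne
  set x : Chains F V 0 := esingle 0 ({p} : Finset V) (aug F F V a) with hxdef
  have hxm : x ∈ chainsIn F F V (A ∩ B) 0 := esingle_mem_chainsIn hp _
  have hxa : aug F F V x = aug F F V a := aug_esingle_vertex p _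
  have hax : a - x ∈ cyclesIn F F V A 0 := by
    refine mem_cyclesIn_zero.2 ⟨by rw [map_sub, hxa, sub_self], ?_⟩
    exact Submodule.sub_mem _ ha (chainsIn_mono Set.inter_subset_left hxm)
  obtain ⟨u, hu, hue⟩ := vA _ hax
  have hbx : b + x ∈ cyclesIn F F V B 0 := by
    refine mem_cyclesIn_zero.2 ⟨?_, ?_⟩
    · rw [map_add, hxa]
      have : aug F F V a + aug F F V b = 0 := by rw [← map_add]; exact hzc
      linear_combination this
    · exact Submodule.add_mem _ hb (chainsIn_mono Set.inter_subset_right hxm)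
  obtain ⟨v, hv, hve⟩ := vB _ hbx
  refine ⟨u + v, Submodule.add_mem _ (chainsIn_mono Set.subset_union_left hu)
    (chainsIn_mono Set.subset_union_right hv), ?_⟩
  rw [map_add, hue, hve]
  abel

end HellyAux5
section HellyAux6
variable {V} {F : Type*} [Field F] {ι : Type*}

/-- intersection of a subfamily -/
def KK (Γ : ι → Set (Finset V)) (τ : Finset ι) : Set (Finset V) := ⋂ i ∈ τ, Γ i
/-- union of a subfamily -/
def UU (Γ : ι → Set (Finset V)) (σ : Finset ι) : Set (Finset V) := ⋃ i ∈ σ, Γ i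

theorem KK_insert [DecidableEq ι] {Γ : ι → Set (Finset V)} {τ : Finset ι} {i : ι} :
    KK Γ (insert i τ) = Γ i ∩ KK Γ τ := by
  unfold KK; rw [Finset.set_biInter_insert]

theorem UU_insert [DecidableEq ι] {Γ : ι → Set (Finset V)} {σ : Finset ι} {j : ι} :
    UU Γ (insert j σ) = Γ j ∪ UU Γ σ := by
  unfold UU; rw [Finset.set_biUnion_insert]

theorem UU_singleton {Γ : ι → Set (Finset V)} {j : ι} : UU Γ ({j} : Finset ι) = Γ j := by
  unfold UU; simp

theorem KK_empty {Γ : ι → Set (Finset V)} : KK Γ (∅ : Finset ι) = Set.univ := by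
  unfold KK; simp

theorem UU_empty {Γ : ι → Set (Finset V)} : UU Γ (∅ : Finset ι) = ∅ := by
  unfold UU; simp

theorem KK_mono {Γ : ι → Set (Finset V)} {τ τ' : Finset ι} (h : τ ⊆ τ') : KK Γ τ' ⊆ KK Γ τ := by
  unfold KK
  intro x hx
  simp only [Set.mem_iInter] at hx ⊢
  exact fun i hi => hx i (h hi)

theorem UU_mono {Γ : ι → Set (Finset V)} {σ σ' : Finset ι} (h : σ ⊆ σ') : UU Γ σ ⊆ UU Γ σ' := by
  unfold UU
  intro x hx
  simp only [Set.mem_iUnion] at hx ⊢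
  obtain ⟨i, hi, hx⟩ := hx
  exact ⟨i, h hi, hx⟩

theorem KK_subset_UU {Γ : ι → Set (Finset V)} {τ σ : Finset ι} {j : ι} (hj : j ∈ τ) (hj' : j ∈ σ) :
    KK Γ τ ⊆ UU Γ σ := by
  intro x hx
  simp only [KK, Set.mem_iInter] at hx
  simp only [UU, Set.mem_iUnion]
  exact ⟨j, hj', hx j hj⟩

theorem isComplex_KU [DecidableEq ι] {Γ : ι → Set (Finset V)} (hΓ : ∀ i, IsComplex (Γ i))
    {τ σ : Finset ι} (hσ : σ.Nonempty) : IsComplex (KK Γ τ ∩ UU Γ σ) := by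
  rcases τ.eq_empty_or_nonempty with rfl | hτ
  · rw [KK_empty, Set.univ_inter]
    exact isComplex_biUnion (fun i _ => hΓ i)
  · exact isComplex_inter (isComplex_biInter hτ (fun i _ => hΓ i)) (isComplex_biUnion (fun i _ => hΓ i))

theorem isComplex_KK [DecidableEq ι] {Γ : ι → Set (Finset V)} (hΓ : ∀ i, IsComplex (Γ i))
    {τ : Finset ι} (hτ : τ.Nonempty) : IsComplex (KK Γ τ) :=
  isComplex_biInter hτ (fun i _ => hΓ i)

/-- The master lemma: mixed vanishing for `K τ ∩ U σ` via repeated Mayer-Vietoris. -/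
theorem Mlem [DecidableEq ι] {Γ : ι → Set (Finset V)} (hΓ : ∀ i, IsComplex (Γ i)) {κ : ℕ}
    (H1v : ∀ (τ : Finset ι) (d : ℕ), 1 ≤ τ.card → τ.card + d + 1 = κ → VanN F (KK Γ τ) d)
    (H1n : ∀ τ : Finset ι, τ.card = κ → (KK Γ τ).Nonempty)
    (σ : Finset ι) :
    σ.Nonempty → ∀ τ : Finset ι, Disjoint τ σ →
      (∀ d : ℕ, τ.card + d + 2 = κ → VanN F (KK Γ τ ∩ UU Γ σ) d) ∧
      (τ.card + 1 = κ → (KK Γ τ ∩ UU Γ σ).Nonempty) := by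
  induction σ using Finset.strongInduction with
  | _ σ ih =>
  intro hσne τ hdisj
  obtain ⟨j, hj⟩ := hσne
  rcases Finset.eq_singleton_or_nontrivial hj with hsing | hnt
  · -- base case : single union member
    subst hsing
    set i := j with hii
    have hi : i ∉ τ := fun h => (Finset.disjoint_left.1 hdisj h) (Finset.mem_singleton_self i)
    have hset : KK Γ τ ∩ UU Γ ({i} : Finset ι) = KK Γ (insert i τ) := by
      rw [UU_singleton, KK_insert, Set.inter_comm]
    constructor
    · intro d hd
      rw [hset]
      have hci : (insert i τ).card = τ.card + 1 := Finset.card_insert_of_notMem hi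
      exact H1v (insert i τ) d (by omega) (by omega)
    · intro ht
      rw [hset]
      refine H1n (insert i τ) ?_
      rw [Finset.card_insert_of_notMem hi]
      omega
  · -- inductive step
    set σ' := σ.erase j with hσ'
    have hcard2 : 2 ≤ σ.card := Finset.one_lt_card_iff_nontrivial.2 hnt
    have hσ'ne : σ'.Nonempty := by
      rw [← Finset.card_pos, hσ', Finset.card_erase_of_mem hj]
      omega
    have hjσ' : j ∉ σ' := Finset.notMem_erase j σ
    have hσeq : σ = insert j σ' := (Finset.insert_erase hj).symm
    have hjτ : j ∉ τ := fun h => (Finset.disjoint_left.1 hdisj h) hj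
    have hdisj' : Disjoint τ σ' := Finset.disjoint_of_subset_right (Finset.erase_subset _ _) hdisj
    have hdisjB : Disjoint (insert j τ) σ' := by
      rw [Finset.disjoint_insert_left]
      exact ⟨hjσ', hdisj'⟩
    have hss : σ' ⊂ σ := Finset.erase_ssubset hj
    have ihA := ih σ' hss hσ'ne τ hdisj'
    have ihAB := ih σ' hss hσ'ne (insert j τ) hdisjB
    have hcardins : (insert j τ).card = τ.card + 1 := Finset.card_insert_of_notMem hjτ
    set A := KK Γ τ ∩ UU Γ σ' with hAdef
    set B := KK Γ (insert j τ) with hBdef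
    have hA : IsComplex A := isComplex_KU hΓ hσ'ne
    have hB : IsComplex B := isComplex_KK hΓ (Finset.insert_nonempty _ _)
    have hABu : A ∪ B = KK Γ τ ∩ UU Γ σ := by
      rw [hAdef, hBdef, hσeq, UU_insert, KK_insert]
      ext x
      simp only [Set.mem_inter_iff, Set.mem_union]
      tauto
    have hABi : A ∩ B = KK Γ (insert j τ) ∩ UU Γ σ' := by
      rw [hAdef, hBdef]
      ext x
      simp only [Set.mem_inter_iff, KK_insert]
      tauto
    constructor
    · intro d hd
      rw [← hABu]
      have vB : VanN F B d := H1v (insert j τ) d (by omega) (by omega)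
      have vA : VanN F A d := ihA.1 d (by omega)
      cases d with
      | zero =>
        refine MV1_zero hA hB vA vB ?_
        rw [hABi]
        exact ihAB.2 (by omega)
      | succ e =>
        refine MV1_succ hA hB vA vB ?_
        rw [hABi]
        exact ihAB.1 e (by omega)
    · intro ht
      have hsub : KK Γ (insert j τ) ⊆ KK Γ τ ∩ UU Γ σ :=
        Set.subset_inter (KK_mono (Finset.subset_insert j τ))
          (KK_subset_UU (Finset.mem_insert_self j τ) hj)
      exact Set.Nonempty.mono hsub (H1n _ (by omega))

end HellyAux6
section HellyAux7
variable {V} {F : Type*} [Field F] {ι : Type*} [LinearOrder ι]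

/-- number of elements of `σ` below `y` -/
def rankIn (σ : Finset ι) (y : ι) : ℕ := (σ.filter (· < y)).card

/-- `σ` minus its `m` smallest elements -/
def tpart (m : ℕ) (σ : Finset ι) : Finset ι := σ.filter fun y => m ≤ rankIn σ y

theorem tpart_subset {m : ℕ} {σ : Finset ι} : tpart m σ ⊆ σ := Finset.filter_subset _ _

theorem tpart_zero {σ : Finset ι} : tpart 0 σ = σ :=
  Finset.filter_true_of_mem (fun _ _ => Nat.zero_le _)

theorem tpart_mono {m : ℕ} {σ σ' : Finset ι} (h : σ ⊆ σ') : tpart m σ ⊆ tpart m σ' := by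
  intro y hy
  rw [tpart, Finset.mem_filter] at hy ⊢
  refine ⟨h hy.1, le_trans hy.2 ?_⟩
  exact Finset.card_le_card (Finset.filter_subset_filter _ h)

theorem rank_min' {σ : Finset ι} (h : σ.Nonempty) : rankIn σ (σ.min' h) = 0 := by
  rw [rankIn, Finset.card_eq_zero, Finset.filter_eq_empty_iff]
  intro z hz
  exact not_lt.2 (σ.min'_le z hz)

theorem rank_erase_min' {σ : Finset ι} (h : σ.Nonempty) {y : ι} (hy : y ∈ σ.erase (σ.min' h)) :
    rankIn σ y = rankIn (σ.erase (σ.min' h)) y + 1 := by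
  set a := σ.min' h with ha
  have hyσ : y ∈ σ := Finset.mem_of_mem_erase hy
  have hay : a < y := lt_of_le_of_ne (σ.min'_le y hyσ) (Ne.symm (Finset.ne_of_mem_erase hy))
  have : σ.filter (· < y) = insert a ((σ.erase a).filter (· < y)) := by
    ext z
    simp only [Finset.mem_filter, Finset.mem_insert, Finset.mem_erase]
    constructor
    · intro hz
      by_cases hza : z = a
      · exact Or.inl hza
      · exact Or.inr ⟨⟨hza, hz.1⟩, hz.2⟩
    · rintro (rfl | hz)
      · exact ⟨σ.min'_mem h, hay⟩
      · exact ⟨hz.1.2, hz.2⟩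
  rw [rankIn, this, Finset.card_insert_of_notMem (fun hc => ?_), rankIn]
  exact (Finset.mem_erase.1 (Finset.mem_of_mem_filter _ hc)).1 rfl

theorem tpart_succ {m : ℕ} {σ : Finset ι} (h : σ.Nonempty) :
    tpart (m+1) σ = tpart m (σ.erase (σ.min' h)) := by
  ext y
  simp only [tpart, Finset.mem_filter]
  constructor
  · intro hy
    have hya : y ≠ σ.min' h := by
      rintro rfl
      rw [rank_min' h] at hy
      omega
    have hy' : y ∈ σ.erase (σ.min' h) := Finset.mem_erase.2 ⟨hya, hy.1⟩
    have := rank_erase_min' h hy'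
    refine ⟨hy', by omega⟩
  · intro hy
    have := rank_erase_min' h hy.1
    exact ⟨Finset.mem_of_mem_erase hy.1, by omega⟩

theorem tpart_card (m : ℕ) : ∀ σ : Finset ι, (tpart m σ).card = σ.card - m := by
  induction m with
  | zero => intro σ; rw [tpart_zero]; rfl
  | succ m ih =>
    intro σ
    rcases σ.eq_empty_or_nonempty with rfl | h
    · simp [tpart]
    · rw [tpart_succ h, ih, Finset.card_erase_of_mem (σ.min'_mem h)]
      omega

end HellyAux7

section HellyAux8
variable {V} {F : Type*} [Field F] {ι : Type*} [LinearOrder ι] [Fintype ι]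

/-- the nested complexes along which the descending chain is built -/
def NNc (Γ : ι → Set (Finset V)) (κ n : ℕ) (σ : Finset ι) : Set (Finset V) :=
  KK Γ (tpart (n - κ) σ) ∩ UU Γ σᶜ

theorem NNc_mono {Γ : ι → Set (Finset V)} {κ n : ℕ} {σ : Finset ι} {i : ι} :
    NNc Γ κ n (insert i σ) ⊆ NNc Γ κ n σ :=
  Set.inter_subset_inter (KK_mono (tpart_mono (Finset.subset_insert i σ)))
    (UU_mono (by rw [Finset.compl_insert]; exact Finset.erase_subset _ _))

theorem NNc_subset_UU {Γ : ι → Set (Finset V)} {κ n : ℕ} {σ : Finset ι} :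
    NNc Γ κ n σ ⊆ UU Γ σᶜ := Set.inter_subset_right

theorem NNc_isComplex {Γ : ι → Set (Finset V)} (hΓ : ∀ i, IsComplex (Γ i)) {κ n : ℕ}
    {σ : Finset ι} (h : σᶜ.Nonempty) : IsComplex (NNc Γ κ n σ) :=
  isComplex_KU hΓ h

theorem NNc_solv {Γ : ι → Set (Finset V)} (hΓ : ∀ i, IsComplex (Γ i)) {κ n : ℕ}
    (hn : Fintype.card ι = n) (hκn : κ + 1 ≤ n)
    (H1v : ∀ (τ : Finset ι) (d : ℕ), 1 ≤ τ.card → τ.card + d + 1 = κ → VanN F (KK Γ τ) d)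
    (H1n : ∀ τ : Finset ι, τ.card = κ → (KK Γ τ).Nonempty)
    (H2v : ∀ (ρ : Finset ι) (d : ℕ), ρ.card = d + 2 → κ + 1 ≤ ρ.card → VanN F (UU Γ ρ) d)
    {σ : Finset ι} {d : ℕ} (hd : σ.card + d + 2 = n) :
    VanN F (NNc Γ κ n σ) d := by
  have hcc : σᶜ.card = n - σ.card := by rw [Finset.card_compl, hn]
  have hsn : σ.card ≤ n - 2 := by omega
  have htc : (tpart (n - κ) σ).card = σ.card - (n - κ) := tpart_card _ σ
  by_cases hcase : κ + 1 ≤ n - σ.card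
  · -- union regime
    have ht0 : tpart (n - κ) σ = ∅ := Finset.card_eq_zero.1 (by omega)
    have : NNc Γ κ n σ = UU Γ σᶜ := by
      rw [NNc, ht0, KK_empty, Set.univ_inter]
    rw [this]
    exact H2v σᶜ d (by omega) (by omega)
  · -- mixed regime via the master lemma
    have hcne : σᶜ.Nonempty := by rw [← Finset.card_pos]; omega
    have hdisj : Disjoint (tpart (n - κ) σ) σᶜ := by
      rw [Finset.disjoint_left]
      intro a ha hac
      exact (Finset.mem_compl.1 hac) (tpart_subset ha)
    exact (Mlem hΓ H1v H1n σᶜ hcne (tpart (n - κ) σ) hdisj).1 d (by omega)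

theorem NNc_nonempty {Γ : ι → Set (Finset V)} (hΓ : ∀ i, IsComplex (Γ i)) {κ n : ℕ}
    (hn : Fintype.card ι = n) (hκn : κ + 1 ≤ n)
    (H1v : ∀ (τ : Finset ι) (d : ℕ), 1 ≤ τ.card → τ.card + d + 1 = κ → VanN F (KK Γ τ) d)
    (H1n : ∀ τ : Finset ι, τ.card = κ → (KK Γ τ).Nonempty)
    (H2n : κ = 0 → ∀ ρ : Finset ι, ρ.card = 1 → (UU Γ ρ).Nonempty)
    {σ : Finset ι} (hd : σ.card + 1 = n) :
    (NNc Γ κ n σ).Nonempty := by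
  have hcc : σᶜ.card = n - σ.card := by rw [Finset.card_compl, hn]
  have htc : (tpart (n - κ) σ).card = σ.card - (n - κ) := tpart_card _ σ
  have hcne : σᶜ.Nonempty := by rw [← Finset.card_pos]; omega
  rcases Nat.eq_zero_or_pos κ with hκ0 | hκpos
  · have ht0 : tpart (n - κ) σ = ∅ := Finset.card_eq_zero.1 (by omega)
    have : NNc Γ κ n σ = UU Γ σᶜ := by rw [NNc, ht0, KK_empty, Set.univ_inter]
    rw [this]
    exact H2n hκ0 σᶜ (by omega)
  · have hdisj : Disjoint (tpart (n - κ) σ) σᶜ := by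
      rw [Finset.disjoint_left]
      intro a ha hac
      exact (Finset.mem_compl.1 hac) (tpart_subset ha)
    exact (Mlem hΓ H1v H1n σᶜ hcne (tpart (n - κ) σ) hdisj).2 (by omega)

end HellyAux8
section HellyAux9
variable {V} {F : Type*} [Field F] {ι : Type*} [LinearOrder ι] [Fintype ι]

/-- Čech-type alternating sum over cofaces -/
noncomputable def cechSum {d : ℕ} (e : Finset ι → Chains F V d) (σ : Finset ι) : Chains F V d :=
  ∑ i ∈ σᶜ, esgn F σ i • e (insert i σ)

/-- double Čech sums cancel -/
theorem cechSum_cechSum {d : ℕ} (g : Finset ι → Chains F V d) (σ : Finset ι) :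
    ∑ i ∈ σᶜ, esgn F σ i • cechSum g (insert i σ) = 0 := by
  have : ∀ i ∈ σᶜ, esgn F σ i • cechSum g (insert i σ)
      = ∑ j ∈ σᶜ.erase i, (esgn F σ i * esgn F (insert i σ) j) • g (insert j (insert i σ)) := by
    intro i hi
    rw [cechSum, Finset.smul_sum, Finset.compl_insert]
    exact Finset.sum_congr rfl fun j hj => smul_smul _ _ _
  rw [Finset.sum_congr rfl this]
  refine sum_pair_antisym σᶜ _ ?_
  intro i hi j hj hij
  have hiσ : i ∉ σ := Finset.mem_compl.1 hi
  have hjσ : j ∉ σ := Finset.mem_compl.1 hj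
  rw [show insert i (insert j σ) = insert j (insert i σ) from Finset.insert_comm _ _ _,
    esgn_antisym hiσ hjσ hij, neg_smul]
  exact neg_add_cancel _

/-- the descending chain construction -/
noncomputable def chaseE (base : Finset ι → Chains F V 0)
    (solve : (d : ℕ) → Finset ι → Chains F V d → Chains F V (d+1)) :
    (d : ℕ) → Finset ι → Chains F V d
  | 0 => base
  | (d+1) => fun σ => solve d σ (cechSum (chaseE base solve d) σ)

theorem chaseE_zero {base : Finset ι → Chains F V 0}
    {solve : (d : ℕ) → Finset ι → Chains F V d → Chains F V (d+1)} :
    chaseE base solve 0 = base := rfl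

variable {Γ : ι → Set (Finset V)} {κ n : ℕ}
variable {base : Finset ι → Chains F V 0}
variable {solve : (d : ℕ) → Finset ι → Chains F V d → Chains F V (d+1)}

theorem chase_spec
    (Hbase1 : ∀ σ : Finset ι, σ.card + 1 = n → base σ ∈ chainsIn F F V (NNc Γ κ n σ) 0)
    (Hbase2 : ∀ σ : Finset ι, σ.card + 1 = n → ∀ i, i ∉ σ → aug F F V (base σ) = esgn F σ i)
    (Hsolve : ∀ (d : ℕ) (σ : Finset ι) (z : Chains F V d), σ.card + d + 2 = n →
      z ∈ cyclesIn F F V (NNc Γ κ n σ) d →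
      solve d σ z ∈ chainsIn F F V (NNc Γ κ n σ) (d+1) ∧ bdry F F V d (solve d σ z) = z)
    (hn : Fintype.card ι = n) :
    ∀ d : ℕ,
      (∀ σ : Finset ι, σ.card + d + 1 = n →
         chaseE base solve d σ ∈ chainsIn F F V (NNc Γ κ n σ) d)
      ∧ (∀ e : ℕ, e + 1 = d → ∀ σ : Finset ι, σ.card + e + 2 = n →
          bdry F F V e (chaseE base solve (e+1) σ) = cechSum (chaseE base solve e) σ) := by
  intro d
  induction d with
  | zero =>
    exact ⟨fun σ h => Hbase1 σ h, fun e he => by omega⟩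
  | succ d ih =>
    -- the alternating sum at level d is a cycle
    have hZmem : ∀ σ : Finset ι, σ.card + d + 2 = n →
        cechSum (chaseE base solve d) σ ∈ chainsIn F F V (NNc Γ κ n σ) d := by
      intro σ hσ
      refine Submodule.sum_mem _ fun i hi => Submodule.smul_mem _ _ ?_
      refine chainsIn_mono NNc_mono (ih.1 (insert i σ) ?_)
      rw [Finset.card_insert_of_notMem (Finset.mem_compl.1 hi)]
      omega
    have hZ : ∀ σ : Finset ι, σ.card + d + 2 = n →
        cechSum (chaseE base solve d) σ ∈ cyclesIn F F V (NNc Γ κ n σ) d := by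
      intro σ hσ
      cases d with
      | zero =>
        refine mem_cyclesIn_zero.2 ⟨?_, hZmem σ hσ⟩
        rw [cechSum, map_sum]
        have hterm : ∀ i ∈ σᶜ, aug F F V (esgn F σ i • chaseE base solve 0 (insert i σ))
            = ∑ j ∈ σᶜ.erase i, esgn F σ i * esgn F (insert i σ) j := by
          intro i hi
          have hiσ : i ∉ σ := Finset.mem_compl.1 hi
          have hcard : (σᶜ.erase i).card = 1 := by
            rw [Finset.card_erase_of_mem hi, Finset.card_compl, hn]
            omega
          obtain ⟨j, hj⟩ := Finset.card_eq_one.1 hcard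
          have hjmem : j ∈ σᶜ.erase i := by rw [hj]; exact Finset.mem_singleton_self j
          have hjins : j ∉ insert i σ := by
            rw [Finset.mem_insert]
            push_neg
            exact ⟨(Finset.mem_erase.1 hjmem).1,
              Finset.mem_compl.1 (Finset.mem_of_mem_erase hjmem)⟩
          rw [hj, Finset.sum_singleton, map_smul, smul_eq_mul, chaseE_zero,
            Hbase2 (insert i σ) (by rw [Finset.card_insert_of_notMem hiσ]; omega) j hjins]
        rw [Finset.sum_congr rfl hterm]
        refine sum_pair_antisym σᶜ _ ?_
        intro i hi j hj hij
        rw [esgn_antisym (Finset.mem_compl.1 hi) (Finset.mem_compl.1 hj) hij]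
        ring
      | succ e =>
        refine mem_cyclesIn_succ.2 ⟨?_, hZmem σ hσ⟩
        rw [cechSum, map_sum]
        have hterm : ∀ i ∈ σᶜ, bdry F F V e (esgn F σ i • chaseE base solve (e+1) (insert i σ))
            = esgn F σ i • cechSum (chaseE base solve e) (insert i σ) := by
          intro i hi
          rw [map_smul, ih.2 e rfl (insert i σ)
            (by rw [Finset.card_insert_of_notMem (Finset.mem_compl.1 hi)]; omega)]
        rw [Finset.sum_congr rfl hterm]
        exact cechSum_cechSum _ σ
    constructor
    · intro σ hσ
      show solve d σ (cechSum (chaseE base solve d) σ) ∈ _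
      exact (Hsolve d σ _ (by omega) (hZ σ (by omega))).1
    · intro e he σ hσ
      have hed : e = d := by omega
      subst hed
      show bdry F F V e (solve e σ (cechSum (chaseE base solve e) σ)) = _
      exact (Hsolve e σ _ hσ (hZ σ hσ)).2

end HellyAux9
section HellyAux10
variable {V} {F : Type*} [Field F] {ι : Type*} [LinearOrder ι] [Fintype ι]

theorem cech_exact {Γ : ι → Set (Finset V)} {pickf : Finset V → ι}
    (Hpick : ∀ f : Finset V, f ∉ Γ (pickf f))
    {d r : ℕ} (c : Finset ι → Chains F V d)
    (Hsupp : ∀ σ : Finset ι, σ.card = r + 1 → c σ ∈ chainsIn F F V (UU Γ σᶜ) d)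
    (Hclosed : ∀ ρ : Finset ι, ρ.card = r → cechSum c ρ = 0) :
    ∃ Y : Finset ι → Chains F V d,
      (∀ σ : Finset ι, σ.card = r + 2 → Y σ ∈ chainsIn F F V (UU Γ σᶜ) d) ∧
      (∀ σ : Finset ι, σ.card = r + 1 → cechSum Y σ = c σ) := by
  classical
  refine ⟨fun σ => ∑ v ∈ σ, esgn F (σ.erase v) v •
    Finsupp.filter (fun f : {s : Finset V // s.card = d + 1} => pickf ↑f = v) (c (σ.erase v)), ?_, ?_⟩
  · -- membership
    intro σ hσ
    refine Submodule.sum_mem _ fun v hv => Submodule.smul_mem _ _ ?_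
    rw [mem_chainsIn]
    intro f hf
    rw [Finsupp.support_filter, Finset.mem_filter] at hf
    have hmem := mem_chainsIn.1 (Hsupp (σ.erase v)
      (by rw [Finset.card_erase_of_mem hv]; omega)) f hf.1
    simp only [UU, Set.mem_iUnion] at hmem ⊢
    obtain ⟨j, hj, hfj⟩ := hmem
    refine ⟨j, ?_, hfj⟩
    rw [Finset.mem_compl] at hj ⊢
    intro hjσ
    rw [Finset.mem_erase] at hj
    push_neg at hj
    have hjv : j = v := by
      by_contra hne
      exact hj hne hjσ
    subst hjv
    rw [← hf.2] at hfj
    exact Hpick ↑f hfj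
  · -- the contraction identity
    intro σ hσ
    ext f
    set P : ι := pickf ↑f with hP
    -- value of Y at a (r+2)-set
    have Yapp : ∀ τ : Finset ι, (((∑ v ∈ τ, esgn F (τ.erase v) v •
        Finsupp.filter (fun f : {s : Finset V // s.card = d + 1} => pickf ↑f = v) (c (τ.erase v))) : Chains F V d) f)
        = if P ∈ τ then esgn F (τ.erase P) P * (c (τ.erase P)) f else 0 := by
      intro τ
      rw [Finsupp.finset_sum_apply]
      have : ∀ v ∈ τ, ((esgn F (τ.erase v) v •
          Finsupp.filter (fun f : {s : Finset V // s.card = d + 1} => pickf ↑f = v) (c (τ.erase v))) : Chains F V d) f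
          = if P = v then esgn F (τ.erase v) v * (c (τ.erase v)) f else 0 := by
        intro v hv
        rw [Finsupp.smul_apply, Finsupp.filter_apply, smul_eq_mul]
        simp only [← hP]
        rw [mul_ite, mul_zero]
      rw [Finset.sum_congr rfl this, Finset.sum_ite_eq]
    rw [cechSum, Finsupp.finset_sum_apply]
    have hterm : ∀ i ∈ σᶜ, ((esgn F σ i • (∑ v ∈ insert i σ, esgn F ((insert i σ).erase v) v •
        Finsupp.filter (fun f : {s : Finset V // s.card = d + 1} => pickf ↑f = v) (c ((insert i σ).erase v))) : Chains F V d)) f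
        = esgn F σ i * (if P ∈ insert i σ then
            esgn F ((insert i σ).erase P) P * (c ((insert i σ).erase P)) f else 0) := by
      intro i hi
      rw [Finsupp.smul_apply, smul_eq_mul, Yapp (insert i σ)]
    rw [Finset.sum_congr rfl hterm]
    by_cases hPσ : P ∈ σ
    · -- case: the apex is inside σ ; use the closedness hypothesis
      set ρ : Finset ι := σ.erase P with hρ
      have hPρ : P ∉ ρ := Finset.notMem_erase _ _
      have hρc : ρ.card = r := by rw [hρ, Finset.card_erase_of_mem hPσ]; omega
      have hins : insert P ρ = σ := Finset.insert_erase hPσ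
      have hcl0 : (cechSum c ρ) f = 0 := by rw [Hclosed ρ hρc]; rfl
      rw [cechSum, Finsupp.finset_sum_apply] at hcl0
      have hρcompl : ρᶜ = insert P σᶜ := by
        rw [hρ, Finset.compl_erase]
      have hPc : P ∉ σᶜ := by rw [Finset.mem_compl]; exact fun h => h hPσ
      rw [hρcompl, Finset.sum_insert hPc] at hcl0
      simp only [Finsupp.smul_apply, smul_eq_mul] at hcl0
      rw [hins] at hcl0
      -- now rewrite the main sum
      have hmain : ∀ i ∈ σᶜ, esgn F σ i * (if P ∈ insert i σ then
            esgn F ((insert i σ).erase P) P * (c ((insert i σ).erase P)) f else 0)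
          = -(esgn F ρ P * esgn F ρ i) * (c (insert i ρ)) f := by
        intro i hi
        have hiσ : i ∉ σ := Finset.mem_compl.1 hi
        have hiP : i ≠ P := fun e => hiσ (e ▸ hPσ)
        rw [if_pos (Finset.mem_insert_of_mem hPσ)]
        have her : (insert i σ).erase P = insert i ρ := by
          rw [hρ, Finset.erase_insert_of_ne hiP]
        rw [her, ← mul_assoc]
        congr 1
        -- sign identity
        have hiρ : i ∉ ρ := fun h => hiσ (Finset.mem_of_mem_erase h)
        have hstar := esgn_antisym (F := F) hPρ hiρ (fun e => hiP e.symm)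
        have hb2 := esgn_mul_self (F := F) (insert i ρ) P
        have hc2 := esgn_mul_self (F := F) ρ P
        have hσins : σ = insert P ρ := hins.symm
        rw [hσins]
        linear_combination (esgn F ρ P * esgn F (insert i ρ) P) * hstar
          - (esgn F (insert P ρ) i * esgn F (insert i ρ) P) * hc2
          - (esgn F ρ P * esgn F ρ i) * hb2
      rw [Finset.sum_congr rfl hmain]
      have : ∀ i ∈ σᶜ, -(esgn F ρ P * esgn F ρ i) * (c (insert i ρ)) f
          = -esgn F ρ P * (esgn F ρ i * (c (insert i ρ)) f) := by
        intro i hi; ring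
      rw [Finset.sum_congr rfl this, ← Finset.mul_sum]
      have hc2 := esgn_mul_self (F := F) ρ P
      linear_combination (-(esgn F ρ P)) * hcl0 + ((c σ) f) * hc2
    · -- case: the apex is outside σ
      have hPc : P ∈ σᶜ := Finset.mem_compl.2 hPσ
      have hmain : ∀ i ∈ σᶜ, esgn F σ i * (if P ∈ insert i σ then
            esgn F ((insert i σ).erase P) P * (c ((insert i σ).erase P)) f else 0)
          = if P = i then (c σ) f else 0 := by
        intro i hi
        by_cases hip : P = i
        · subst hip
          rw [if_pos (Finset.mem_insert_self _ _), if_pos rfl,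
            Finset.erase_insert hPσ, ← mul_assoc, esgn_mul_self, one_mul]
        · rw [if_neg ?_, mul_zero, if_neg hip]
          rw [Finset.mem_insert]
          push_neg
          exact ⟨hip, hPσ⟩
      rw [Finset.sum_congr rfl hmain, Finset.sum_ite_eq, if_pos hPc]

end HellyAux10
section HellyAux11
variable {V} {F : Type*} [Field F] {ι : Type*} [LinearOrder ι] [Fintype ι]
variable {Γ : ι → Set (Finset V)} {κ n : ℕ}
variable {base : Finset ι → Chains F V 0}
variable {solve : (d : ℕ) → Finset ι → Chains F V d → Chains F V (d+1)}
variable {pickf : Finset V → ι}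

theorem esgn_empty (i : ι) : esgn F (∅ : Finset ι) i = 1 := by
  unfold esgn
  rw [Finset.filter_empty, Finset.card_empty, pow_zero]

theorem cechSum_sub {d : ℕ} (e1 e2 : Finset ι → Chains F V d) (σ : Finset ι) :
    cechSum (fun τ => e1 τ - e2 τ) σ = cechSum e1 σ - cechSum e2 σ := by
  rw [cechSum, cechSum, cechSum, ← Finset.sum_sub_distrib]
  exact Finset.sum_congr rfl fun i hi => smul_sub _ _ _

theorem cechSum_bdry {d : ℕ} (e : Finset ι → Chains F V (d+1)) (σ : Finset ι) :
    cechSum (fun τ => bdry F F V d (e τ)) σ = bdry F F V d (cechSum e σ) := by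
  rw [cechSum, cechSum, map_sum]
  exact Finset.sum_congr rfl fun i hi => (map_smul _ _ _).symm

theorem staircase
    (hΓ : ∀ i, IsComplex (Γ i))
    (Hbase1 : ∀ σ : Finset ι, σ.card + 1 = n → base σ ∈ chainsIn F F V (NNc Γ κ n σ) 0)
    (Hbase2 : ∀ σ : Finset ι, σ.card + 1 = n → ∀ i, i ∉ σ → aug F F V (base σ) = esgn F σ i)
    (Hsolve : ∀ (d : ℕ) (σ : Finset ι) (z : Chains F V d), σ.card + d + 2 = n →
      z ∈ cyclesIn F F V (NNc Γ κ n σ) d →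
      solve d σ z ∈ chainsIn F F V (NNc Γ κ n σ) (d+1) ∧ bdry F F V d (solve d σ z) = z)
    (hn : Fintype.card ι = n) (hn2 : 2 ≤ n)
    (Hpick : ∀ f : Finset V, f ∉ Γ (pickf f)) :
    ∀ j d : ℕ, j + d + 2 = n →
    ∃ (Yp : Finset ι → Chains F V (d+1)) (Y : Finset ι → Chains F V d),
      (∀ σ : Finset ι, σ.card = j + 2 → Y σ ∈ chainsIn F F V (UU Γ σᶜ) d) ∧
      (∀ σ : Finset ι, σ.card = j + 1 →
        cechSum Y σ = chaseE base solve d σ - bdry F F V d (Yp σ)) := by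
  have spec := chase_spec Hbase1 Hbase2 Hsolve hn
  intro j
  induction j with
  | zero =>
    intro d hd
    set W : Chains F V (d+1) := chaseE base solve (d+1) ∅ with hW
    have hWmem : W ∈ chainsIn F F V (UU Γ (∅ : Finset ι)ᶜ) (d+1) :=
      chainsIn_mono NNc_subset_UU ((spec (d+1)).1 ∅ (by simp; omega))
    have hWbdry : bdry F F V d W = cechSum (chaseE base solve d) ∅ :=
      (spec (d+1)).2 d rfl ∅ (by simp; omega)
    -- split W into pieces supported in the unions avoiding one index
    have hsplit : UU Γ ((∅ : Finset ι)ᶜ) = ⋃ i ∈ (Finset.univ : Finset ι), UU Γ ({i}ᶜ) := by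
      ext f
      simp only [UU, Set.mem_iUnion]
      constructor
      · rintro ⟨i, hi, hf⟩
        have : ∃ i' : ι, i' ≠ i := by
          have h1 : 1 < Fintype.card ι := by omega
          obtain ⟨a, b, hab⟩ := Fintype.exists_pair_of_one_lt_card h1
          rcases eq_or_ne a i with rfl | h
          · exact ⟨b, fun e => hab e.symm⟩
          · exact ⟨a, h⟩
        obtain ⟨i', hi'⟩ := this
        exact ⟨i', Finset.mem_univ _, i, by simp [Finset.mem_compl, hi'.symm], hf⟩
      · rintro ⟨i, _, i', hi', hf⟩
        exact ⟨i', by simp, hf⟩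
    rw [hsplit] at hWmem
    obtain ⟨Wf, hWf, hWsum⟩ := chainsIn_biUnion_split Finset.univ W hWmem
    set Yp : Finset ι → Chains F V (d+1) := fun σ => ∑ i ∈ σ, Wf i with hYp
    have hYpmem : ∀ σ : Finset ι, σ.card = 1 → Yp σ ∈ chainsIn F F V (UU Γ σᶜ) (d+1) := by
      intro σ hσ
      obtain ⟨i, rfl⟩ := Finset.card_eq_one.1 hσ
      have he : Yp {i} = Wf i := by rw [hYp]; simp
      rw [he]
      exact hWf i
    have hcs : ∀ ρ : Finset ι, ρ.card = 0 →
        cechSum (fun σ => chaseE base solve d σ - bdry F F V d (Yp σ)) ρ = 0 := by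
      intro ρ hρ
      rw [Finset.card_eq_zero.1 hρ]
      rw [cechSum_sub, cechSum_bdry]
      have : cechSum Yp ∅ = W := by
        rw [cechSum]
        have : ∀ i ∈ (∅ : Finset ι)ᶜ, esgn F ∅ i • Yp (insert i ∅) = Wf i := by
          intro i hi
          rw [esgn_empty, one_smul, hYp]
          simp
        rw [Finset.sum_congr rfl this]
        rw [hWsum]
        congr 1
        simp [Finset.compl_empty]
      rw [this, hWbdry, sub_self]
    have hsupp : ∀ σ : Finset ι, σ.card = 0 + 1 →
        (chaseE base solve d σ - bdry F F V d (Yp σ)) ∈ chainsIn F F V (UU Γ σᶜ) d := by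
      intro σ hσ
      refine Submodule.sub_mem _ ?_ ?_
      · exact chainsIn_mono NNc_subset_UU ((spec d).1 σ (by omega))
      · exact bdry_mem_chainsIn (isComplex_biUnion (fun i _ => hΓ i)) (hYpmem σ (by omega))
    obtain ⟨Y, hY1, hY2⟩ := cech_exact Hpick _ hsupp (by simpa using hcs)
    exact ⟨Yp, Y, fun σ h => hY1 σ (by omega), fun σ h => hY2 σ (by omega)⟩
  | succ j ih =>
    intro d hd
    obtain ⟨Yp, Y, hYmem, hYrel⟩ := ih (d+1) (by omega)
    have hsupp : ∀ σ : Finset ι, σ.card = (j + 1) + 1 →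
        (chaseE base solve d σ - bdry F F V d (Y σ)) ∈ chainsIn F F V (UU Γ σᶜ) d := by
      intro σ hσ
      refine Submodule.sub_mem _ ?_ ?_
      · exact chainsIn_mono NNc_subset_UU ((spec d).1 σ (by omega))
      · exact bdry_mem_chainsIn (isComplex_biUnion (fun i _ => hΓ i)) (hYmem σ (by omega))
    have hcs : ∀ ρ : Finset ι, ρ.card = j + 1 →
        cechSum (fun σ => chaseE base solve d σ - bdry F F V d (Y σ)) ρ = 0 := by
      intro ρ hρ
      rw [cechSum_sub, cechSum_bdry, hYrel ρ hρ, map_sub]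
      rw [(spec (d+1)).2 d rfl ρ (by omega)]
      have : bdry F F V d (bdry F F V (d+1) (Yp ρ)) = 0 := bdry_bdry _
      rw [this, sub_zero, sub_self]
    obtain ⟨Ynew, hY1, hY2⟩ := cech_exact Hpick _ hsupp hcs
    exact ⟨Y, Ynew, fun σ h => hY1 σ (by omega), fun σ h => hY2 σ (by omega)⟩

theorem final_contradiction
    (hΓ : ∀ i, IsComplex (Γ i))
    (Hbase1 : ∀ σ : Finset ι, σ.card + 1 = n → base σ ∈ chainsIn F F V (NNc Γ κ n σ) 0)
    (Hbase2 : ∀ σ : Finset ι, σ.card + 1 = n → ∀ i, i ∉ σ → aug F F V (base σ) = esgn F σ i)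
    (Hsolve : ∀ (d : ℕ) (σ : Finset ι) (z : Chains F V d), σ.card + d + 2 = n →
      z ∈ cyclesIn F F V (NNc Γ κ n σ) d →
      solve d σ z ∈ chainsIn F F V (NNc Γ κ n σ) (d+1) ∧ bdry F F V d (solve d σ z) = z)
    (hn : Fintype.card ι = n) (hn2 : 2 ≤ n)
    (Hpick : ∀ f : Finset V, f ∉ Γ (pickf f)) : False := by
  obtain ⟨Yp, Y, hYmem, hYrel⟩ := staircase hΓ Hbase1 Hbase2 Hsolve hn hn2 Hpick (n-2) 0 (by omega)
  have hι : Nonempty ι := by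
    rw [← Fintype.card_pos_iff, hn]; omega
  obtain ⟨i₀⟩ := hι
  set σ : Finset ι := Finset.univ.erase i₀ with hσ
  have hσc : σ.card = n - 1 := by
    rw [hσ, Finset.card_erase_of_mem (Finset.mem_univ _), Finset.card_univ, hn]
  have hi₀ : i₀ ∉ σ := Finset.notMem_erase _ _
  have hins : insert i₀ σ = Finset.univ := by
    rw [hσ, Finset.insert_erase (Finset.mem_univ _)]
  have hcompl : σᶜ = {i₀} := by
    rw [hσ, Finset.compl_erase, Finset.compl_univ]
    rfl
  have hYuniv : Y Finset.univ = 0 := by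
    refine chainsIn_empty (x := Y Finset.univ) ?_
    have := hYmem Finset.univ (by rw [Finset.card_univ, hn]; omega)
    rw [Finset.compl_univ, UU_empty] at this
    exact this
  have hrel := hYrel σ (by omega)
  have hcs0 : cechSum Y σ = 0 := by
    rw [cechSum, hcompl, Finset.sum_singleton, hins, hYuniv, smul_zero]
  rw [hcs0] at hrel
  have haug : aug F F V (chaseE base solve 0 σ) = 0 := by
    have : chaseE base solve 0 σ = bdry F F V 0 (Yp σ) := by
      rw [← sub_eq_zero]
      exact hrel.symm
    rw [this]
    exact aug_bdry
  have hbase : aug F F V (chaseE base solve 0 σ) = esgn F σ i₀ := by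
    rw [chaseE_zero]
    exact Hbase2 σ (by omega) i₀ hi₀
  rw [hbase] at haug
  exact esgn_ne_zero σ i₀ haug

end HellyAux11

/-- Homological Helly-type theorem mixing intersection and union conditions. -/
theorem homological_helly_mixed {V ι : Type*} [LinearOrder V] [Fintype ι]
    (F : Type*) [Field F]
    (X : Set (Finset V)) (hX : IsComplex X)
    (Γ : ι → Set (Finset V)) (hΓ : ∀ i, IsComplex (Γ i) ∧ Γ i ⊆ X)
    (k : ℤ) (hk1 : -1 ≤ k) (hk2 : k ≤ (Fintype.card ι : ℤ) - 2)
    (h1 : ∀ Γ' : Finset ι, 1 ≤ Γ'.card → (Γ'.card : ℤ) ≤ k + 1 →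
      RedHVanish F F V (⋂ i ∈ Γ', Γ i) (k - Γ'.card))
    (h2 : ∀ Γ' : Finset ι, k + 2 ≤ (Γ'.card : ℤ) →
      RedHVanish F F V (⋃ i ∈ Γ', Γ i) ((Γ'.card : ℤ) - 2)) :
    (⋂ i, Γ i).Nonempty := by
  classical
  by_contra hcon
  letI : LinearOrder ι := LinearOrder.lift' (Fintype.equivFin ι) (Fintype.equivFin ι).injective
  set n := Fintype.card ι with hn'
  have hn : Fintype.card ι = n := rfl
  set κ := (k+1).toNat with hκ'
  have hκz : (κ : ℤ) = k + 1 := Int.toNat_of_nonneg (by omega)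
  have hκn : κ + 1 ≤ n := by omega
  have hΓc : ∀ i, IsComplex (Γ i) := fun i => (hΓ i).1
  have H1v : ∀ (τ : Finset ι) (d : ℕ), 1 ≤ τ.card → τ.card + d + 1 = κ →
      VanN F (KK Γ τ) d := by
    intro τ d h1c h2c
    have hv := h1 τ h1c (by omega)
    rw [show (k - (τ.card : ℤ)) = ((d : ℕ) : ℤ) from by omega] at hv
    exact redHVanish_toVan hv
  have H1n : ∀ τ : Finset ι, τ.card = κ → (KK Γ τ).Nonempty := by
    intro τ hc
    rcases Nat.eq_zero_or_pos κ with h0 | hpos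
    · obtain rfl : τ = ∅ := Finset.card_eq_zero.1 (by omega)
      rw [KK_empty]
      exact Set.univ_nonempty
    · have hv := h1 τ (by omega) (by omega)
      rw [show (k - (τ.card : ℤ)) = -1 from by omega] at hv
      exact redHVanish_toNonempty hv
  have H2v : ∀ (ρ : Finset ι) (d : ℕ), ρ.card = d + 2 → κ + 1 ≤ ρ.card →
      VanN F (UU Γ ρ) d := by
    intro ρ d h1c h2c
    have hv := h2 ρ (by omega)
    rw [show ((ρ.card : ℤ) - 2) = ((d : ℕ) : ℤ) from by omega] at hv
    exact redHVanish_toVan hv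
  have H2n : κ = 0 → ∀ ρ : Finset ι, ρ.card = 1 → (UU Γ ρ).Nonempty := by
    intro h0 ρ hc
    have hv := h2 ρ (by omega)
    rw [show ((ρ.card : ℤ) - 2) = -1 from by omega] at hv
    exact redHVanish_toNonempty hv
  have Hempty : ∀ f : Finset V, ∃ j, f ∉ Γ j := by
    intro f
    by_contra h
    push_neg at h
    exact hcon ⟨f, Set.mem_iInter.2 h⟩
  -- degenerate case n = 1
  rcases Nat.lt_or_ge n 2 with hn1 | hn2
  · have hone : Fintype.card ι = 1 := by omega
    obtain ⟨i₀, hall⟩ := Fintype.card_eq_one_iff.1 hone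
    have hκ0 : κ = 0 := by omega
    obtain ⟨f, hf⟩ := H2n hκ0 {i₀} (by simp)
    rw [UU_singleton] at hf
    obtain ⟨j, hj⟩ := Hempty f
    rw [hall j] at hj
    exact hj hf
  -- main case
  set pickf : Finset V → ι := fun f => (Hempty f).choose with hpickf
  have Hpick : ∀ f : Finset V, f ∉ Γ (pickf f) := fun f => (Hempty f).choose_spec
  have hcne : ∀ σ : Finset ι, σ.card + 1 = n → σᶜ.Nonempty := by
    intro σ h
    rw [← Finset.card_pos, Finset.card_compl, hn]
    omega
  have hvex : ∀ σ : Finset ι, σ.card + 1 = n → ∃ v : V, ({v} : Finset V) ∈ NNc Γ κ n σ := by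
    intro σ h
    exact vertex_mem (NNc_isComplex hΓc (hcne σ h))
      (NNc_nonempty hΓc hn hκn H1v H1n H2n h)
  have hVne : Nonempty V := by
    have hι : Nonempty ι := by rw [← Fintype.card_pos_iff]; omega
    obtain ⟨i₀⟩ := hι
    obtain ⟨v, _⟩ := hvex (Finset.univ.erase i₀)
      (by rw [Finset.card_erase_of_mem (Finset.mem_univ _), Finset.card_univ]; omega)
    exact ⟨v⟩
  choose! vfun hvfun using hvex
  obtain ⟨base, Hbase1, Hbase2⟩ :
      ∃ base : Finset ι → Chains F V 0,
        (∀ σ : Finset ι, σ.card + 1 = n → base σ ∈ chainsIn F F V (NNc Γ κ n σ) 0) ∧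
        (∀ σ : Finset ι, σ.card + 1 = n → ∀ i, i ∉ σ → aug F F V (base σ) = esgn F σ i) := by
    refine ⟨fun σ =>
      if h : σ.card + 1 = n then
        esgn F σ ((σᶜ).min' (hcne σ h)) • esingle 0 ({vfun σ} : Finset V) (1 : F)
      else 0, ?_, ?_⟩
    · intro σ h
      simp only [dif_pos h]
      exact Submodule.smul_mem _ _ (esingle_mem_chainsIn (hvfun σ h) 1)
    · intro σ h i hi
      have hc1 : σᶜ.card = 1 := by rw [Finset.card_compl, hn]; omega
      obtain ⟨j, hj⟩ := Finset.card_eq_one.1 hc1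
      have him : i = j := by
        have : i ∈ σᶜ := Finset.mem_compl.2 hi
        rw [hj, Finset.mem_singleton] at this
        exact this
      have hmin : (σᶜ).min' (hcne σ h) = j := by
        have h0 : (σᶜ).min' (hcne σ h) ∈ σᶜ := Finset.min'_mem _ _
        have h2 : (σᶜ).min' (hcne σ h) ∈ ({j} : Finset ι) := by
          rw [← hj]; exact h0
        exact Finset.mem_singleton.1 h2
      simp only [dif_pos h]
      rw [map_smul, aug_esingle_vertex, smul_eq_mul, mul_one, hmin, him]
  obtain ⟨solve, Hsolve⟩ :
      ∃ solve : (d : ℕ) → Finset ι → Chains F V d → Chains F V (d+1),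
        ∀ (d : ℕ) (σ : Finset ι) (z : Chains F V d), σ.card + d + 2 = n →
          z ∈ cyclesIn F F V (NNc Γ κ n σ) d →
          solve d σ z ∈ chainsIn F F V (NNc Γ κ n σ) (d+1) ∧
            bdry F F V d (solve d σ z) = z := by
    refine ⟨fun d σ z =>
      if h : σ.card + d + 2 = n ∧ z ∈ cyclesIn F F V (NNc Γ κ n σ) d then
        Classical.choose (NNc_solv hΓc hn hκn H1v H1n H2v h.1 z h.2)
      else 0, ?_⟩
    intro d σ z hd hz
    simp only [dif_pos (And.intro hd hz)]
    exact Classical.choose_spec (NNc_solv hΓc hn hκn H1v H1n H2v hd z hz)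
  exact final_contradiction hΓc Hbase1 Hbase2 Hsolve hn hn2 Hpick
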